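/- Let A be a Schur ring over the infinite dihedral group D∞ such that Z = ⟨z⟩ is an A-subgroup and every basic set of A contained in Z is of the form {z^j, z^{−j}} for some integer j ≥ 0. Then the basic set of A containing s has at most two elements. -/

import Mathlib

open scoped BigOperators

/-- A Schur ring over the group `G` with coefficients in the field `F`, presented by its
partition into finite nonempty basic sets. -/
structure SchurRing (F : Type) [Field F] [CharZero F] (G : Type) [Group G] [DecidableEq G] where
  /-- the basic sets -/
  parts : Set (Finset G)
  nonempty : ∀ C ∈ parts, C.Nonempty
  cover : ∀ g : G, ∃ C ∈ parts, g ∈ C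
  eq_or_disjoint : ∀ C ∈ parts, ∀ D ∈ parts, C = D ∨ Disjoint C D
  one_mem : ({1} : Finset G) ∈ parts
  inv_mem : ∀ C ∈ parts, C.image (·⁻¹) ∈ parts
  mul_mem : ∀ C ∈ parts, ∀ D ∈ parts, ∃ S : Finset (Finset G),
    (↑S : Set (Finset G)) ⊆ parts ∧ ∃ coef : Finset G → F,
      (∑ g ∈ C, MonoidAlgebra.single g (1 : F)) * (∑ g ∈ D, MonoidAlgebra.single g (1 : F))
        = ∑ E ∈ S, coef E • ∑ g ∈ E, MonoidAlgebra.single g (1 : F)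

/-- A subset of `G` is an `A`-set if it is a union of basic sets of `A`. -/
def SchurRing.IsASet {F : Type} [Field F] [CharZero F] {G : Type} [Group G] [DecidableEq G]
    (A : SchurRing F G) (X : Set G) : Prop :=
  ∃ 𝒮 : Set (Finset G), 𝒮 ⊆ A.parts ∧ X = ⋃ C ∈ 𝒮, (C : Set G)

/-- The infinite dihedral group, realized as `DihedralGroup 0`. -/
abbrev Dinf : Type := DihedralGroup 0

/-- The generator `z` of infinite order. -/
def zz : Dinf := DihedralGroup.r 1

/-- The reflection `s` of order two. -/
def ss : Dinf := DihedralGroup.sr 0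

namespace StmtAux

open DihedralGroup

lemma r_eq_r' {i j : ℤ} : (r i : Dinf) = r j ↔ i = j := ⟨fun h => r.inj h, fun h => h ▸ rfl⟩
lemma sr_eq_sr' {i j : ℤ} : (sr i : Dinf) = sr j ↔ i = j := ⟨fun h => sr.inj h, fun h => h ▸ rfl⟩
lemma r_mul_sr' (i j : ℤ) : (r i : Dinf) * sr j = sr (j - i) := rfl
lemma r_mul_r' (i j : ℤ) : (r i : Dinf) * r j = r (i + j) := rfl
lemma r_inv' (i : ℤ) : (r i : Dinf)⁻¹ = r (-i) := rfl
lemma r_ne_sr (i j : ℤ) : (r i : Dinf) ≠ sr j := by simp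

lemma zz_zpow (j : ℤ) : zz ^ j = r j := by
  induction j using Int.induction_on with
  | zero => rfl
  | succ k ih => rw [zpow_add, zpow_one, ih, zz]; rfl
  | pred k ih => rw [zpow_sub, zpow_one, ih, zz]; rfl

/-- The integer index of an element of `Dinf`. -/
def idx : Dinf → ℤ
  | .r i => i
  | .sr i => i

lemma idx_sr (i : ℤ) : idx (sr i) = i := rfl

lemma eval_prod {F : Type} [Field F] (C D : Finset Dinf) (x : Dinf) :
    ((∑ g ∈ C, MonoidAlgebra.single g (1 : F)) * (∑ h ∈ D, MonoidAlgebra.single h (1 : F))).coeff x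
      = ∑ g ∈ C, (if g⁻¹ * x ∈ D then (1 : F) else 0) := by
  rw [Finset.sum_mul_sum]
  simp only [MonoidAlgebra.single_mul_single, one_mul]
  rw [MonoidAlgebra.coeff_sum, Finset.sum_apply']
  refine Finset.sum_congr rfl fun g _ => ?_
  rw [MonoidAlgebra.coeff_sum, Finset.sum_apply']
  calc ∑ h ∈ D, (MonoidAlgebra.single (g * h) (1 : F)).coeff x
      = ∑ h ∈ D, (if h = g⁻¹ * x then (1 : F) else 0) := by
        refine Finset.sum_congr rfl fun h _ => ?_
        rw [MonoidAlgebra.coeff_single, Finsupp.single_apply]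
        congr 1
        exact propext ⟨fun hh => by rw [← hh]; group, fun hh => by rw [hh]; group⟩
    _ = if g⁻¹ * x ∈ D then (1 : F) else 0 := Finset.sum_ite_eq' D _ _

lemma eval_comb {F : Type} [Field F] (S : Finset (Finset Dinf)) (coef : Finset Dinf → F)
    (x : Dinf) :
    (∑ E ∈ S, coef E • ∑ g ∈ E, MonoidAlgebra.single g (1 : F)).coeff x
      = ∑ E ∈ S, coef E * (if x ∈ E then (1 : F) else 0) := by
  rw [MonoidAlgebra.coeff_sum, Finset.sum_apply']
  refine Finset.sum_congr rfl fun E _ => ?_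
  rw [MonoidAlgebra.coeff_smul, Finsupp.smul_apply, MonoidAlgebra.coeff_sum, Finset.sum_apply']
  simp only [MonoidAlgebra.coeff_single, Finsupp.single_apply, smul_eq_mul]
  congr 1
  exact Finset.sum_ite_eq' E x (fun _ => (1 : F))

end StmtAux

open StmtAux DihedralGroup in
/-- If `⟨z⟩` is an `A`-subgroup and every basic set contained in `⟨z⟩` has the form
`{z^j, z^(-j)}` with `j ≥ 0`, then the basic set containing `s` has at most two elements. -/
theorem stmt_7 (F : Type) [Field F] [CharZero F] (A : SchurRing F Dinf)
    (hZ : A.IsASet (Subgroup.zpowers zz : Subgroup Dinf))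
    (hsym : ∀ C ∈ A.parts, (C : Set Dinf) ⊆ (Subgroup.zpowers zz : Subgroup Dinf) →
      ∃ j : ℤ, 0 ≤ j ∧ C = {zz ^ j, zz ^ (-j)})
    (D : Finset Dinf) (hD : D ∈ A.parts) (hsD : ss ∈ D) :
    D.card ≤ 2 := by
  by_contra hcard
  push_neg at hcard
  obtain ⟨𝒮, h𝒮, hZeq⟩ := hZ
  have hssZ : ss ∉ (Subgroup.zpowers zz : Subgroup Dinf) := by
    rw [Subgroup.mem_zpowers_iff]
    rintro ⟨j, hj⟩
    rw [zz_zpow] at hj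
    exact r_ne_sr j 0 hj
  -- every element of D is a reflection
  have hDsr : ∀ d ∈ D, ∃ i : ℤ, d = sr i := by
    intro d hd
    cases d with
    | sr i => exact ⟨i, rfl⟩
    | r k =>
      exfalso
      have hk : (r k : Dinf) ∈ ((Subgroup.zpowers zz : Subgroup Dinf) : Set Dinf) := by
        rw [SetLike.mem_coe, Subgroup.mem_zpowers_iff]
        exact ⟨k, zz_zpow k⟩
      rw [hZeq] at hk
      simp only [Set.mem_iUnion] at hk
      obtain ⟨C, hC𝒮, hkC⟩ := hk
      rcases A.eq_or_disjoint C (h𝒮 hC𝒮) D hD with hEq | hdisj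
      · apply hssZ
        have h1 : (ss : Dinf) ∈ ⋃ C ∈ 𝒮, (C : Set Dinf) :=
          Set.mem_biUnion hC𝒮 (by rw [hEq]; exact_mod_cast hsD)
        rw [← hZeq] at h1
        exact h1
      · exact Finset.disjoint_left.mp hdisj hkC hd
  classical
  set Dimg : Finset ℤ := D.image idx with hDimg
  have hmemD : ∀ t : ℤ, sr t ∈ D ↔ t ∈ Dimg := by
    intro t
    constructor
    · intro h; exact Finset.mem_image.mpr ⟨sr t, h, rfl⟩
    · intro h
      obtain ⟨d, hd, hdt⟩ := Finset.mem_image.mp h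
      obtain ⟨i, rfl⟩ := hDsr d hd
      rw [idx_sr] at hdt
      rwa [← hdt]
  have hcardimg : Dimg.card = D.card := by
    apply Finset.card_image_of_injOn
    intro d hd d' hd' hdd'
    obtain ⟨i, rfl⟩ := hDsr d hd
    obtain ⟨i', rfl⟩ := hDsr d' hd'
    rw [idx_sr, idx_sr] at hdd'
    rw [hdd']
  have hne : Dimg.Nonempty := ⟨0, (hmemD 0).mp hsD⟩
  set a0 := Dimg.min' hne with ha0
  set c0 := Dimg.max' hne with hc0
  have ha0m : a0 ∈ Dimg := Dimg.min'_mem hne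
  have hc0m : c0 ∈ Dimg := Dimg.max'_mem hne
  have hsub : ¬ Dimg ⊆ ({a0, c0} : Finset ℤ) := by
    intro h
    have h1 := Finset.card_le_card h
    have h2 : ({a0, c0} : Finset ℤ).card ≤ 2 := by
      refine le_trans (Finset.card_insert_le _ _) ?_
      simp
    omega
  obtain ⟨b0, hb0D, hb0ne⟩ := Finset.not_subset.mp hsub
  simp only [Finset.mem_insert, Finset.mem_singleton, not_or] at hb0ne
  have hab : a0 < b0 := lt_of_le_of_ne (Dimg.min'_le _ hb0D) (Ne.symm hb0ne.1)
  have hbc : b0 < c0 := lt_of_le_of_ne (Dimg.le_max' _ hb0D) hb0ne.2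
  set m : ℤ := c0 - a0 with hm
  have hmpos : 0 < m := by omega
  -- the basic set containing zz ^ m is {zz^m, zz^(-m)}
  have hzm : zz ^ m ∈ ((Subgroup.zpowers zz : Subgroup Dinf) : Set Dinf) := by
    rw [SetLike.mem_coe, Subgroup.mem_zpowers_iff]
    exact ⟨m, rfl⟩
  rw [hZeq] at hzm
  simp only [Set.mem_iUnion] at hzm
  obtain ⟨C, hC𝒮, hmC⟩ := hzm
  have hCparts := h𝒮 hC𝒮
  have hCsub : (C : Set Dinf) ⊆ ((Subgroup.zpowers zz : Subgroup Dinf) : Set Dinf) := by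
    rw [hZeq]
    exact Set.subset_biUnion_of_mem hC𝒮
  obtain ⟨j, hj0, hCeq⟩ := hsym C hCparts hCsub
  have hjm : j = m := by
    rw [hCeq] at hmC
    simp only [Finset.coe_insert, Finset.coe_singleton, Set.mem_insert_iff,
      Set.mem_singleton_iff, zz_zpow, r_eq_r'] at hmC
    omega
  subst hjm
  have hCfin : C = ({r m, r (-m)} : Finset Dinf) := by
    rw [hCeq, zz_zpow, zz_zpow]
  obtain ⟨S, hS, coef, heq⟩ := A.mul_mem C hCparts D hD
  -- evaluate both sides at sr a0 and sr b0
  have hL : ∀ x : Dinf,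
      ((∑ g ∈ C, MonoidAlgebra.single g (1 : F)) * (∑ h ∈ D, MonoidAlgebra.single h (1 : F))).coeff x
        = (if (r m : Dinf)⁻¹ * x ∈ D then (1 : F) else 0)
          + (if (r (-m) : Dinf)⁻¹ * x ∈ D then (1 : F) else 0) := by
    intro x
    rw [eval_prod, hCfin]
    rw [Finset.sum_insert (by simp only [Finset.mem_singleton, r_eq_r']; omega),
      Finset.sum_singleton]
  -- LHS value at sr a0 is 1
  have e1 : ((r m : Dinf))⁻¹ * sr a0 = sr c0 := by
    rw [r_inv', r_mul_sr']; rw [sr_eq_sr']; omega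
  have e2 : ((r (-m) : Dinf))⁻¹ * sr a0 = sr (a0 - m) := by
    rw [r_inv', r_mul_sr']; rw [sr_eq_sr']; omega
  have e3 : ((r m : Dinf))⁻¹ * sr b0 = sr (b0 + m) := by
    rw [r_inv', r_mul_sr']; rw [sr_eq_sr']; omega
  have e4 : ((r (-m) : Dinf))⁻¹ * sr b0 = sr (b0 - m) := by
    rw [r_inv', r_mul_sr']; rw [sr_eq_sr']; omega
  have hnm1 : (a0 - m) ∉ Dimg := fun h => by have := Dimg.min'_le _ h; omega
  have hnm2 : (b0 + m) ∉ Dimg := fun h => by have := Dimg.le_max' _ h; omega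
  have hnm3 : (b0 - m) ∉ Dimg := fun h => by have := Dimg.min'_le _ h; omega
  have hLa : ((∑ g ∈ C, MonoidAlgebra.single g (1 : F))
      * (∑ h ∈ D, MonoidAlgebra.single h (1 : F))).coeff (sr a0) = 1 := by
    rw [hL, e1, e2, if_pos ((hmemD c0).mpr hc0m),
      if_neg (fun h => hnm1 ((hmemD _).mp h)), add_zero]
  have hLb : ((∑ g ∈ C, MonoidAlgebra.single g (1 : F))
      * (∑ h ∈ D, MonoidAlgebra.single h (1 : F))).coeff (sr b0) = 0 := by
    rw [hL, e3, e4, if_neg (fun h => hnm2 ((hmemD _).mp h)),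
      if_neg (fun h => hnm3 ((hmemD _).mp h)), add_zero]
  -- RHS values at sr a0 and sr b0 agree
  have hsrA : sr a0 ∈ D := (hmemD a0).mpr ha0m
  have hsrB : sr b0 ∈ D := (hmemD b0).mpr hb0D
  have hRab : (∑ E ∈ S, coef E • ∑ g ∈ E, MonoidAlgebra.single g (1 : F)).coeff (sr a0)
      = (∑ E ∈ S, coef E • ∑ g ∈ E, MonoidAlgebra.single g (1 : F)).coeff (sr b0) := by
    rw [eval_comb, eval_comb]
    refine Finset.sum_congr rfl fun E hE => ?_
    congr 1
    have hEp := hS hE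
    have key : (sr a0 ∈ E) ↔ (sr b0 ∈ E) := by
      constructor
      · intro h
        rcases A.eq_or_disjoint E hEp D hD with rfl | hdisj
        · exact hsrB
        · exact absurd hsrA (Finset.disjoint_left.mp hdisj h)
      · intro h
        rcases A.eq_or_disjoint E hEp D hD with rfl | hdisj
        · exact hsrA
        · exact absurd hsrB (Finset.disjoint_left.mp hdisj h)
    simp only [key]
  have h1 := congrArg (fun f : MonoidAlgebra F Dinf => f.coeff (sr a0 : Dinf)) heq
  have h2 := congrArg (fun f : MonoidAlgebra F Dinf => f.coeff (sr b0 : Dinf)) heq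
  rw [hLa] at h1
  rw [hLb] at h2
  rw [hRab, ← h2] at h1
  exact one_ne_zero h1
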